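/- Let p, q be distinct primes and k ∈ {1,...,q−1}, l ∈ {1,...,p−1} with kp + lq = pq − 1. Define the matrix R with columns (1,0,0,0), (0,1,0,0), (l,l,p,0), (k,k,0,q). Then det R = pq, the vector y = R·(1/(pq), 1/(pq), 1/p, 1/q)^T is integral, and y + RZ^4 generates the cyclic quotient group Z^4 / RZ^4. -/

import Mathlib

open scoped BigOperators

noncomputable section

namespace ICRPaper

/-- A real vector is integral if every coordinate is an integer. -/
def IsIntegral {n : ℕ} (x : Fin n → ℝ) : Prop := ∀ i, ∃ z : ℤ, x i = (z : ℝ)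

/-- The lattice of integer points of `ℝ^n`. -/
def intLattice (n : ℕ) : Set (Fin n → ℝ) := {x | IsIntegral x}

/-- Standard dot product on `ℝ^n`. -/
def dot {n : ℕ} (x y : Fin n → ℝ) : ℝ := ∑ i, x i * y i

/-- `pos r`: the cone of non-negative real combinations of the vectors `r i`. -/
def pos {n : ℕ} {ι : Type} [Fintype ι] (r : ι → (Fin n → ℝ)) : Set (Fin n → ℝ) :=
  {x | ∃ lam : ι → ℝ, (∀ i, 0 ≤ lam i) ∧ x = ∑ i, lam i • r i}

/-- Lattice points (w.r.t. a lattice `Λ`) in the half-open parallelepiped spanned by `r`. -/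
def parL {n : ℕ} {ι : Type} [Fintype ι] (Λ : Set (Fin n → ℝ)) (r : ι → (Fin n → ℝ)) :
    Set (Fin n → ℝ) :=
  {x | (∃ lam : ι → ℝ, (∀ i, 0 ≤ lam i ∧ lam i < 1) ∧ x = ∑ i, lam i • r i) ∧ x ∈ Λ}

/-- Integer points in the half-open parallelepiped spanned by `r`. -/
def par {n : ℕ} {ι : Type} [Fintype ι] (r : ι → (Fin n → ℝ)) : Set (Fin n → ℝ) :=
  parL (intLattice n) r

/-- `h` is a Hilbert basis element of the cone `C` with respect to the lattice `Λ`: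
a nonzero lattice vector of `C` which is not the sum of two nonzero lattice vectors of `C`. -/
def IsHilbertL {n : ℕ} (Λ : Set (Fin n → ℝ)) (C : Set (Fin n → ℝ)) (h : Fin n → ℝ) : Prop :=
  h ∈ C ∧ h ∈ Λ ∧ h ≠ 0 ∧
    ∀ a b : Fin n → ℝ, a ∈ C → b ∈ C → a ∈ Λ → b ∈ Λ → a ≠ 0 → b ≠ 0 → h ≠ a + b

/-- The integer Carathéodory rank of `C` with respect to the lattice `Λ`:
the maximum over lattice points `z ∈ C` of the minimal number of Hilbert basis
elements needed to write `z` as a non-negative integral combination. -/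
def ICRL {n : ℕ} (Λ : Set (Fin n → ℝ)) (C : Set (Fin n → ℝ)) : ℕ :=
  sSup {m : ℕ | ∃ z ∈ C, z ∈ Λ ∧
    m = sInf {k : ℕ | ∃ h : Fin k → (Fin n → ℝ), ∃ c : Fin k → ℕ,
      (∀ i, IsHilbertL Λ C (h i)) ∧ z = ∑ i, (c i : ℝ) • h i}}

/-- The integer Carathéodory rank with respect to the integer lattice `ℤ^n`. -/
def ICR {n : ℕ} (C : Set (Fin n → ℝ)) : ℕ := ICRL (intLattice n) C

/-- The lattice `L ∩ ℤ^n`, where `L` is the real span of the vectors `r i`. -/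
def latticeOf {n : ℕ} {ι : Type} [Fintype ι] (r : ι → (Fin n → ℝ)) : Set (Fin n → ℝ) :=
  {x | x ∈ Submodule.span ℝ (Set.range r) ∧ IsIntegral x}

/-- The dual lattice `Λ* = {x ∈ lin Λ : ⟨y, x⟩ ∈ ℤ for all y ∈ Λ}`. -/
def dualLattice {n : ℕ} (Λ : Set (Fin n → ℝ)) : Set (Fin n → ℝ) :=
  {x | x ∈ Submodule.span ℝ Λ ∧ ∀ y ∈ Λ, ∃ m : ℤ, dot y x = (m : ℝ)}

/-- Orthogonal projection onto the orthogonal complement of `v`. -/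
def projPerp {n : ℕ} (v : Fin n → ℝ) (x : Fin n → ℝ) : Fin n → ℝ :=
  x - (dot x v / dot v v) • v

/-- The matrix `R` with columns `(1,0,0,0), (0,1,0,0), (l,l,p,0), (k,k,0,q)`. -/
def Rmat (p q k l : ℕ) : Matrix (Fin 4) (Fin 4) ℤ :=
  !![1, 0, (l : ℤ), (k : ℤ);
     0, 1, (l : ℤ), (k : ℤ);
     0, 0, (p : ℤ), 0;
     0, 0, 0, (q : ℤ)]

/-- for distinct primes `p, q` and `k, l` with `kp + lq = pq − 1`,
the matrix `R` has `det R = pq`, the vector `y = R·(1/(pq), 1/(pq), 1/p, 1/q)ᵀ` is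
integral, and `y + Rℤ^4` generates the cyclic quotient group `ℤ^4 / Rℤ^4`. -/
theorem stmt_19 (p q : ℕ) (hp : p.Prime) (hq : q.Prime) (hpq : p ≠ q)
    (k l : ℕ) (hk1 : 1 ≤ k) (hk2 : k ≤ q - 1) (hl1 : 1 ≤ l) (hl2 : l ≤ p - 1)
    (hkl : k * p + l * q = p * q - 1) :
    (Rmat p q k l).det = (p * q : ℤ) ∧
    ∃ yz : Fin 4 → ℤ,
      (∀ i, (yz i : ℝ) =
        (((Rmat p q k l).map (Int.cast : ℤ → ℝ)).mulVec
          ![1 / ((p : ℝ) * q), 1 / ((p : ℝ) * q), 1 / (p : ℝ), 1 / (q : ℝ)]) i) ∧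
      (IsAddCyclic ((Fin 4 → ℤ) ⧸ LinearMap.range (Matrix.mulVecLin (Rmat p q k l)))) ∧
      ∀ x : Fin 4 → ℤ, ∃ m : ℤ,
        x - m • yz ∈ LinearMap.range (Matrix.mulVecLin (Rmat p q k l)) := by
  have hp0 : (p : ℝ) ≠ 0 := Nat.cast_ne_zero.mpr hp.pos.ne'
  have hq0 : (q : ℝ) ≠ 0 := Nat.cast_ne_zero.mpr hq.pos.ne'
  have hpq1 : 1 ≤ p * q := Nat.one_le_iff_ne_zero.mpr (Nat.mul_ne_zero hp.pos.ne' hq.pos.ne')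
  have hkeyN : k * p + l * q + 1 = p * q := by omega
  have hkey : (k : ℝ) * p + (l : ℝ) * q + 1 = (p : ℝ) * q := by exact_mod_cast hkeyN
  have hco : IsCoprime (p : ℤ) (q : ℤ) := by
    rw [Int.isCoprime_iff_gcd_eq_one]
    exact_mod_cast (Nat.coprime_primes hp hq).mpr hpq
  obtain ⟨u, v, huv⟩ := hco
  -- the generation statement
  have hgen : ∀ x : Fin 4 → ℤ, ∃ m : ℤ,
      x - m • (![1, 1, 1, 1] : Fin 4 → ℤ) ∈
        LinearMap.range (Matrix.mulVecLin (Rmat p q k l)) := by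
    intro x
    refine ⟨u * p * x 3 + v * q * x 2,
      ⟨![x 0 - (u * p * x 3 + v * q * x 2) - l * (u * (x 2 - x 3)) - k * (v * (x 3 - x 2)),
         x 1 - (u * p * x 3 + v * q * x 2) - l * (u * (x 2 - x 3)) - k * (v * (x 3 - x 2)),
         u * (x 2 - x 3), v * (x 3 - x 2)], ?_⟩⟩
    funext i
    fin_cases i <;>
      simp [Rmat, Matrix.mulVecLin, Matrix.mulVec, dotProduct,
        Fin.sum_univ_four, Matrix.cons_val_zero, Matrix.cons_val_one,
        Matrix.head_cons, Pi.sub_apply, Pi.smul_apply, smul_eq_mul] <;>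
      (first
        | ring1
        | linear_combination x 2 * huv
        | linear_combination x 3 * huv)
  refine ⟨?_, ![1, 1, 1, 1], ?_, ?_, hgen⟩
  · simp [Rmat, Matrix.det_succ_row_zero, Fin.sum_univ_succ]
  · intro i
    fin_cases i <;>
      simp [Rmat, Matrix.mulVec, dotProduct, Fin.sum_univ_four,
        Matrix.cons_val_zero, Matrix.cons_val_one, Matrix.head_cons] <;>
      field_simp <;>
      (first
        | ring1
        | linear_combination ((p : ℝ) * q) * hkey
        | linear_combination (-(p : ℝ) * q) * hkey
        | linear_combination (-1 : ℝ) * hkey)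
  · refine ⟨⟨Submodule.Quotient.mk (![1, 1, 1, 1] : Fin 4 → ℤ), fun x => ?_⟩⟩
    obtain ⟨x, rfl⟩ := Submodule.Quotient.mk_surjective _ x
    obtain ⟨m, hmx⟩ := hgen x
    refine AddSubgroup.mem_zmultiples_iff.mpr ⟨m, ?_⟩
    rw [← Submodule.Quotient.mk_smul]
    exact ((Submodule.Quotient.eq _).mpr hmx).symm

end ICRPaper
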